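/- Let V be a real vector space with a symmetric bilinear form Q, and suppose V = P ⊕ M is a direct sum decomposition into Q-orthogonal subspaces (Q(p,m) = 0 for all p ∈ P, m ∈ M); for x ∈ V write x⁺ for the P-component of x. Assume Q is positive semidefinite on P and negative semidefinite on M. Then for every α ∈ V and every finite family E₁, …, E_k ∈ V, there exist signs ε₁, …, ε_k ∈ {+1, −1} such that the element a = α + Σᵢ εᵢ Eᵢ satisfies Q(a⁺, a⁺) ≥ Q(α, α). -/

import Mathlib

/-- If `V = P ⊕ M` with `P` and `M` orthogonal for a symmetric bilinear form `Q` that is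
positive semidefinite on `P` and negative semidefinite on `M`, then for every `α ∈ V` and
every finite family `E₁, …, E_k`, one can choose signs `ε i ∈ {1, -1}` so that the
`P`-component `a⁺` of `a = α + ∑ i, ε i • E i` satisfies `Q a⁺ a⁺ ≥ Q α α`. -/
theorem exists_signs_selfdual_part_sq_ge
    {V : Type*} [AddCommGroup V] [Module ℝ V]
    (Q : LinearMap.BilinForm ℝ V) (hQsymm : ∀ x y : V, Q x y = Q y x)
    (P M : Submodule ℝ V) (hcompl : IsCompl P M)
    (horth : ∀ p ∈ P, ∀ m ∈ M, Q p m = 0)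
    (hpsd : ∀ p ∈ P, 0 ≤ Q p p)
    (hnsd : ∀ m ∈ M, Q m m ≤ 0)
    (α : V) (k : ℕ) (E : Fin k → V) :
    ∃ ε : Fin k → ℝ, (∀ i, ε i = 1 ∨ ε i = -1) ∧
      ∀ aplus : V, aplus ∈ P → (α + ∑ i, ε i • E i) - aplus ∈ M →
        Q α α ≤ Q aplus aplus := by
  set π : V →ₗ[ℝ] V := P.subtype ∘ₗ P.linearProjOfIsCompl M hcompl with hπ
  have hπP : ∀ x, π x ∈ P := fun x => (P.linearProjOfIsCompl M hcompl x).2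
  have hπM : ∀ x, x - π x ∈ M := by
    intro x
    have h := Submodule.projection_add_projection_eq_self hcompl x
    have h2 : x - π x = (M.linearProjOfIsCompl P hcompl.symm x : V) := by
      have h3 := (eq_sub_of_add_eq' h).symm
      exact h3
    rw [h2]
    exact (M.linearProjOfIsCompl P hcompl.symm x).2
  -- key: Q x x ≤ Q (π x) (π x)
  have key : ∀ x, Q x x ≤ Q (π x) (π x) := by
    intro x
    have hm := hπM x
    have hx : x = π x + (x - π x) := by abel
    calc Q x x = Q (π x) (π x) + Q (π x) (x - π x) + Q (x - π x) (π x)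
          + Q (x - π x) (x - π x) := by
          conv_lhs => rw [hx]
          simp only [map_add, LinearMap.add_apply]
          ring
      _ = Q (π x) (π x) + Q (x - π x) (x - π x) := by
          rw [horth _ (hπP x) _ hm, hQsymm (x - π x) (π x), horth _ (hπP x) _ hm]; ring
      _ ≤ Q (π x) (π x) := by linarith [hnsd _ hm]
  -- induction over finsets
  have main : ∀ s : Finset (Fin k), ∃ ε : Fin k → ℝ, (∀ i, ε i = 1 ∨ ε i = -1) ∧
      Q (π α) (π α) ≤ Q (π (α + ∑ i ∈ s, ε i • E i)) (π (α + ∑ i ∈ s, ε i • E i)) := by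
    intro s
    induction s using Finset.induction_on with
    | empty => exact ⟨fun _ => 1, fun _ => Or.inl rfl, by simp⟩
    | @insert j s hj ih =>
      obtain ⟨ε, hε, hle⟩ := ih
      set b := α + ∑ i ∈ s, ε i • E i with hb
      have hc : ∃ sgn : ℝ, (sgn = 1 ∨ sgn = -1) ∧ 0 ≤ sgn * Q (π b) (π (E j)) := by
        rcases le_or_gt 0 (Q (π b) (π (E j))) with h | h
        · exact ⟨1, Or.inl rfl, by linarith⟩
        · exact ⟨-1, Or.inr rfl, by nlinarith⟩
      obtain ⟨sgn, hsgn, hcross⟩ := hc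
      refine ⟨Function.update ε j sgn, ?_, ?_⟩
      · intro i
        rcases eq_or_ne i j with rfl | h
        · rw [Function.update_self]; exact hsgn
        · rw [Function.update_of_ne h]; exact hε i
      · have hsum : α + ∑ i ∈ insert j s, (Function.update ε j sgn) i • E i
            = b + sgn • E j := by
          rw [Finset.sum_insert hj, Function.update_self, hb]
          have : ∑ i ∈ s, (Function.update ε j sgn) i • E i = ∑ i ∈ s, ε i • E i :=
            Finset.sum_congr rfl fun i hi =>
              by rw [Function.update_of_ne (by rintro rfl; exact hj hi)]
          rw [this]; abel
        rw [hsum]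
        have hsq : sgn * sgn = 1 := by rcases hsgn with rfl | rfl <;> norm_num
        have hπadd : π (b + sgn • E j) = π b + sgn • π (E j) := by
          rw [map_add, map_smul]
        rw [hπadd]
        have hexp : Q (π b + sgn • π (E j)) (π b + sgn • π (E j))
            = Q (π b) (π b) + 2 * (sgn * Q (π b) (π (E j)))
              + (sgn * sgn) * Q (π (E j)) (π (E j)) := by
          simp only [map_add, map_smul, LinearMap.add_apply, LinearMap.smul_apply,
            smul_eq_mul]
          rw [hQsymm (π (E j)) (π b)]
          ring
        rw [hexp]
        nlinarith [hpsd _ (hπP (E j))]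
  obtain ⟨ε, hε, hle⟩ := main Finset.univ
  refine ⟨ε, hε, fun aplus hp hm => ?_⟩
  set a := α + ∑ i, ε i • E i with ha
  have huniq : aplus = π a := by
    have h1 : aplus - π a ∈ P := P.sub_mem hp (hπP a)
    have h2 : aplus - π a ∈ M := by
      have h := M.sub_mem (hπM a) hm
      have heq : (a - π a) - (a - aplus) = aplus - π a := by abel
      rw [← heq]; exact h
    have h3 : aplus - π a ∈ P ⊓ M := ⟨h1, h2⟩
    rw [hcompl.inf_eq_bot] at h3
    have h4 : aplus - π a = 0 := h3
    exact sub_eq_zero.mp h4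
  rw [huniq]
  exact le_trans (key α) hle
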